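/- Let n ≥ 2 and let S be an n×n irreducible column stochastic matrix such that RSR⁻¹ is symmetric for some invertible diagonal matrix R; write S(d) = (1−d)I + dS for d ∈ [0, 1]. Let F₁ and F₂ be n×n diagonal matrices with positive diagonal entries such that F₂ ≠ F₁ (temporal heterogeneity) and at least one of F₁, F₂ is non-scalar (spatial heterogeneity). Let d₁, …, d_m ∈ [0, 1] and suppose for each i there is an entrywise positive vector xᵢ with S(dᵢ)F₂S(dᵢ)F₁ xᵢ = xᵢ (the resident coalition has a positive period-2 point). If the coalition is a (possibly mixed) Nash equilibrium, i.e. the spectral radius ρ(S(d̃)F₂S(d̃)F₁) ≤ 1 for every d̃ ∈ [0, 1], then: (1) max_i dᵢ > 0; (2) (F₁)_{jj}(F₂)_{jj} ≤ 1 for every patch j (no source patches); and (3) (F₁)_{jj}(F₂)_{jj} < 1 for at least one patch j (at least one sink patch). -/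

import Mathlib

open Matrix

/-- The spectral radius of a real square matrix: the maximum modulus of its complex
eigenvalues. -/
noncomputable def specRad {n : ℕ} (M : Matrix (Fin n) (Fin n) ℝ) : ℝ :=
  sSup ((fun μ => ‖μ‖) '' spectrum ℂ (M.map (fun x => (x : ℂ))))

/-- A real square matrix is column stochastic if its entries are nonnegative and each
column sums to one. -/
def ColStochastic {n : ℕ} (S : Matrix (Fin n) (Fin n) ℝ) : Prop :=
  (∀ i j, 0 ≤ S i j) ∧ ∀ j, ∑ i, S i j = 1

/-- A square matrix is irreducible if for every pair of indices `(j,k)` some positive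
power has positive `(j,k)` entry. -/
def MatIrreducible {n : ℕ} (S : Matrix (Fin n) (Fin n) ℝ) : Prop :=
  ∀ j k : Fin n, ∃ p : ℕ, 0 < p ∧ 0 < (S ^ p) j k

open scoped RealInnerProductSpace

lemma abs_le_specRad {n : ℕ} (M : Matrix (Fin n) (Fin n) ℝ) {t : ℝ} {v : Fin n → ℝ}
    (hv : v ≠ 0) (h : M.mulVec v = t • v) : |t| ≤ specRad M := by
  set Mc := M.map (fun x => (x : ℂ)) with hMc
  have hvc : (fun i => (v i : ℂ)) ≠ 0 := by
    intro hc; apply hv; funext i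
    have := congrFun hc i; simpa using this
  have heig : Mc.mulVec (fun i => (v i : ℂ)) = (t : ℂ) • (fun i => (v i : ℂ)) := by
    funext i
    have := congrFun h i
    simp only [Matrix.mulVec, dotProduct, Pi.smul_apply, smul_eq_mul] at this ⊢
    simp only [hMc, Matrix.map_apply]
    exact_mod_cast this
  have hev : Module.End.HasEigenvalue (Matrix.toLin' Mc) ((t : ℂ)) :=
    Module.End.hasEigenvalue_of_hasEigenvector
      ⟨Module.End.mem_eigenspace_iff.mpr (by rw [Matrix.toLin'_apply, heig]), hvc⟩
  have hmem : (t : ℂ) ∈ spectrum ℂ Mc := by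
    rw [← AlgEquiv.spectrum_eq (Matrix.toLinAlgEquiv' (R := ℂ) (n := Fin n)) Mc]
    exact Module.End.hasEigenvalue_iff_mem_spectrum.mp hev
  have hfin : ((fun μ => ‖μ‖) '' spectrum ℂ Mc).Finite :=
    (Matrix.finite_spectrum Mc).image _
  have : ‖(t : ℂ)‖ ≤ specRad M := le_csSup hfin.bddAbove ⟨(t : ℂ), hmem, rfl⟩
  simpa using this

lemma pow_nonneg_entries {n : ℕ} {S : Matrix (Fin n) (Fin n) ℝ}
    (hpos : ∀ i j, 0 ≤ S i j) (p : ℕ) : ∀ i j, 0 ≤ (S ^ p) i j := by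
  induction p with
  | zero => intro i j; simp [Matrix.one_apply]; positivity
  | succ p ih =>
    intro i j
    rw [pow_succ, Matrix.mul_apply]
    exact Finset.sum_nonneg fun k _ => mul_nonneg (ih i k) (hpos k j)

lemma eigen_unique {n : ℕ} (hn : 0 < n) {S : Matrix (Fin n) (Fin n) ℝ}
    (hpos : ∀ i j, 0 ≤ S i j) (hirr : MatIrreducible S) {y z : Fin n → ℝ}
    (hy : ∀ j, 0 < y j)
    (hSy : S.mulVec y = y) (hSz : S.mulVec z = z) :
    ∃ c : ℝ, ∀ j, z j = c * y j := by
  haveI : Nonempty (Fin n) := ⟨⟨0, hn⟩⟩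
  set c := Finset.univ.inf' Finset.univ_nonempty (fun j => z j / y j) with hc
  obtain ⟨j0, -, hj0⟩ := Finset.exists_mem_eq_inf' Finset.univ_nonempty (fun j => z j / y j)
  set w := fun j => z j - c * y j with hwdef
  have hw0 : ∀ j, 0 ≤ w j := by
    intro j
    have : c ≤ z j / y j := Finset.inf'_le _ (Finset.mem_univ j)
    have := (le_div_iff₀ (hy j)).mp this
    simpa [hwdef] using this
  have hwj0 : w j0 = 0 := by
    have : c = z j0 / y j0 := hj0
    simp [hwdef, this, div_mul_cancel₀ _ (hy j0).ne']
  have hSw : S.mulVec w = w := by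
    have : w = z - c • y := by funext j; simp [hwdef]
    rw [this, Matrix.mulVec_sub, Matrix.mulVec_smul, hSy, hSz]
  have hpow : ∀ p : ℕ, (S ^ p).mulVec w = w := by
    intro p
    induction p with
    | zero => simp
    | succ p ih => rw [pow_succ', ← Matrix.mulVec_mulVec, ih, hSw]
  have hwzero : ∀ k, w k = 0 := by
    intro k
    obtain ⟨p, hp, hppos⟩ := hirr j0 k
    have h0 : (0:ℝ) = ∑ t, (S ^ p) j0 t * w t := by
      have := congrFun (hpow p) j0
      simp only [Matrix.mulVec, dotProduct] at this
      rw [this, hwj0]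
    have hterm : ∀ t ∈ Finset.univ, 0 ≤ (S ^ p) j0 t * w t :=
      fun t _ => mul_nonneg (pow_nonneg_entries hpos p j0 t) (hw0 t)
    have := (Finset.sum_eq_zero_iff_of_nonneg hterm).mp h0.symm k (Finset.mem_univ k)
    rcases mul_eq_zero.mp this with h | h
    · exact absurd h hppos.ne'
    · exact h
  exact ⟨c, fun j => by have := hwzero j; simp [hwdef] at this; linarith⟩

lemma inner_eq_dot {n : ℕ} (x y : EuclideanSpace ℝ (Fin n)) :
    ⟪x, y⟫ = (x : Fin n → ℝ) ⬝ᵥ (y : Fin n → ℝ) := by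
  simp [PiLp.inner_apply, RCLike.inner_apply, dotProduct, mul_comm]

lemma rayleigh_bound {n : ℕ} (hn : 0 < n) (A : Matrix (Fin n) (Fin n) ℝ) (hA : A.IsHermitian)
    (v : Fin n → ℝ) :
    ∃ (t : ℝ) (w : Fin n → ℝ), w ≠ 0 ∧ A.mulVec w = t • w ∧
      v ⬝ᵥ A.mulVec v ≤ t * (v ⬝ᵥ v) := by
  haveI : Nonempty (Fin n) := ⟨⟨0, hn⟩⟩
  classical
  have hAT : Aᵀ = A := by
    have := hA.eq
    rwa [Matrix.conjTranspose_eq_transpose_of_trivial] at this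
  set b := hA.eigenvectorBasis with hb
  set lam := hA.eigenvalues with hlam
  obtain ⟨i₀, -, hi₀⟩ := Finset.exists_mem_eq_sup' Finset.univ_nonempty lam
  set t := Finset.univ.sup' Finset.univ_nonempty lam with ht
  have hbne : (⇑(b i₀) : Fin n → ℝ) ≠ 0 := fun h => b.orthonormal.ne_zero i₀ (by ext i; simpa using congrFun h i)
  refine ⟨t, b i₀, hbne, by rw [hi₀]; exact hA.mulVec_eigenvectorBasis i₀, ?_⟩
  set V : EuclideanSpace ℝ (Fin n) := WithLp.toLp 2 v with hV
  set Y : EuclideanSpace ℝ (Fin n) := WithLp.toLp 2 (A.mulVec v) with hY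
  have key : ∀ i, ⟪b i, Y⟫ = lam i * ⟪b i, V⟫ := by
    intro i
    rw [inner_eq_dot, inner_eq_dot]
    show (⇑(b i)) ⬝ᵥ (A *ᵥ v) = lam i * ((⇑(b i)) ⬝ᵥ v)
    rw [Matrix.dotProduct_mulVec, ← hAT, Matrix.vecMul_transpose,
      hA.mulVec_eigenvectorBasis i, smul_dotProduct]
    rfl
  have expand : v ⬝ᵥ A.mulVec v = ∑ i, lam i * (⟪b i, V⟫ * ⟪b i, V⟫) := by
    rw [show v ⬝ᵥ A.mulVec v = ⟪V, Y⟫ from (inner_eq_dot V Y).symm, ← b.sum_inner_mul_inner V Y]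
    refine Finset.sum_congr rfl fun i _ => ?_
    rw [key i, real_inner_comm V (b i)]
    ring
  have expand2 : v ⬝ᵥ v = ∑ i, ⟪b i, V⟫ * ⟪b i, V⟫ := by
    rw [show v ⬝ᵥ v = ⟪V, V⟫ from (inner_eq_dot V V).symm, ← b.sum_inner_mul_inner V V]
    refine Finset.sum_congr rfl fun i _ => ?_
    rw [real_inner_comm V (b i)]
  rw [expand, expand2, Finset.mul_sum]
  refine Finset.sum_le_sum fun i _ => ?_
  exact mul_le_mul_of_nonneg_right (Finset.le_sup' _ (Finset.mem_univ i)) (mul_self_nonneg _)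


lemma core_balanced {n : ℕ} (hn : 0 < n) (S : Matrix (Fin n) (Fin n) ℝ)
    (hS : ColStochastic S)
    (hirr : MatIrreducible S) (r : Fin n → ℝ) (hr : ∀ i, r i ≠ 0)
    (hsymS : ∀ j k, r j ^ 2 * S j k = r k ^ 2 * S k j)
    (f₁ f₂ : Fin n → ℝ) (hf₁ : ∀ j, 0 < f₁ j)
    (hbal : ∀ j, f₂ j = (f₁ j)⁻¹)
    (hspat : ∃ j k, f₁ j ≠ f₁ k)
    (hle : specRad (S * Matrix.diagonal f₂ * (S * Matrix.diagonal f₁)) ≤ 1) : False := by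
  classical
  haveI : Nonempty (Fin n) := ⟨⟨0, hn⟩⟩
  set M := S * Matrix.diagonal f₂ * (S * Matrix.diagonal f₁) with hM
  set q : Fin n → ℝ := fun j => Real.sqrt (f₁ j) * r j with hqdef
  have hq : ∀ j, q j ≠ 0 := fun j =>
    mul_ne_zero (ne_of_gt (Real.sqrt_pos.mpr (hf₁ j))) (hr j)
  have hq2 : ∀ j, q j * q j = f₁ j * (r j * r j) := by
    intro j
    simp only [hqdef]
    rw [show Real.sqrt (f₁ j) * r j * (Real.sqrt (f₁ j) * r j)
        = Real.sqrt (f₁ j) * Real.sqrt (f₁ j) * (r j * r j) by ring,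
      Real.mul_self_sqrt (hf₁ j).le]
  set B : Matrix (Fin n) (Fin n) ℝ := Matrix.of (fun i j => q i * S i j * (q j)⁻¹) with hB
  set v : Fin n → ℝ := fun j => (q j)⁻¹ with hvdef
  have hBTv : Bᵀ *ᵥ v = v := by
    funext i
    simp only [Matrix.mulVec, dotProduct, Matrix.transpose_apply, hB, Matrix.of_apply,
      hvdef]
    have hterm : ∀ j : Fin n, q j * S j i * (q i)⁻¹ * (q j)⁻¹ = S j i * (q i)⁻¹ := by
      intro j
      field_simp
      rw [mul_div_mul_left _ _ (hq j)]
    rw [Finset.sum_congr rfl fun j _ => hterm j, ← Finset.sum_mul, hS.2 i, one_mul]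
  have hsim : ∀ i j, q i * M i j = (B * Bᵀ) i j * q j := by
    intro i j
    rw [hM, Matrix.mul_apply, Matrix.mul_apply, Finset.sum_mul, Finset.mul_sum]
    refine Finset.sum_congr rfl fun k _ => ?_
    simp only [Matrix.mul_diagonal, Matrix.transpose_apply, hB, Matrix.of_apply, hbal k]
    have key : S j k * (q j * q j) * f₁ k = S k j * (q k * q k) * f₁ j := by
      rw [hq2 j, hq2 k]
      linear_combination (f₁ j * f₁ k) * hsymS j k
    rw [show q i * S i k * (q k)⁻¹ * (q j * S j k * (q k)⁻¹) * q j
        = (q i * S i k * q j * S j k * q j) / (q k * q k) by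
      rw [div_eq_mul_inv, mul_inv]; ring]
    rw [show q i * (S i k * (f₁ k)⁻¹ * (S k j * f₁ j))
        = (q i * S i k * S k j * f₁ j) / (f₁ k) by rw [div_eq_mul_inv]; ring]
    rw [div_eq_div_iff (hf₁ k).ne' (mul_ne_zero (hq k) (hq k))]
    linear_combination (-(q i * S i k)) * key
  have hvv_pos : 0 < v ⬝ᵥ v := by
    apply Finset.sum_pos
    · intro i _
      exact mul_self_pos.mpr (inv_ne_zero (hq i))
    · exact Finset.univ_nonempty
  set u : Fin n → ℝ := B *ᵥ v with hu
  have huv : v ⬝ᵥ u = v ⬝ᵥ v := by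
    rw [hu, Matrix.dotProduct_mulVec, ← Matrix.transpose_transpose B,
      Matrix.vecMul_transpose, hBTv]
  by_cases hBv : u = v
  · -- B v = v : f₁ must be constant, contradiction
    set zq : Fin n → ℝ := fun j => (q j * q j)⁻¹ with hzq
    set yr : Fin n → ℝ := fun j => (r j * r j)⁻¹ with hyr
    have hSzq : S *ᵥ zq = zq := by
      funext i
      have h1 := congrFun hBv i
      simp only [hu, hB, Matrix.mulVec, dotProduct, Matrix.of_apply, hvdef] at h1
      have h2 : ∀ j : Fin n, q i * S i j * (q j)⁻¹ * (q j)⁻¹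
          = q i * (S i j * (q j * q j)⁻¹) := by
        intro j; rw [mul_inv]; ring
      have hsum : ∑ j, q i * (S i j * (q j * q j)⁻¹) = (q i)⁻¹ := by
        rw [← Finset.sum_congr rfl fun j _ => h2 j, h1]
      have h3 : q i * ∑ j, S i j * (q j * q j)⁻¹ = q i * (q i * q i)⁻¹ := by
        rw [Finset.mul_sum, hsum, mul_inv (q i) (q i),
          show q i * ((q i)⁻¹ * (q i)⁻¹) = (q i * (q i)⁻¹) * (q i)⁻¹ by ring,
          mul_inv_cancel₀ (hq i), one_mul]
      have := mul_left_cancel₀ (hq i) h3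
      simpa [Matrix.mulVec, dotProduct, hzq] using this
    have hSyr : S *ᵥ yr = yr := by
      funext i
      have hterm : ∀ j : Fin n, S i j * (r j * r j)⁻¹ = S j i * (r i * r i)⁻¹ := by
        intro j
        rw [← div_eq_mul_inv, ← div_eq_mul_inv,
          div_eq_div_iff (mul_ne_zero (hr j) (hr j)) (mul_ne_zero (hr i) (hr i))]
        linear_combination hsymS i j
      simp only [Matrix.mulVec, dotProduct, hyr]
      rw [Finset.sum_congr rfl fun j _ => hterm j, ← Finset.sum_mul, hS.2 i, one_mul]
    obtain ⟨c, hc⟩ := eigen_unique hn hS.1 hirr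
      (fun j => inv_pos.mpr (mul_self_pos.mpr (hr j))) hSyr hSzq
    have hfc : ∀ j, (f₁ j)⁻¹ = c := by
      intro j
      have h := hc j
      simp only [hzq, hyr] at h
      rw [hq2 j, mul_inv (f₁ j)] at h
      exact mul_right_cancel₀ (inv_ne_zero (mul_ne_zero (hr j) (hr j))) h
    obtain ⟨j, k, hjk⟩ := hspat
    exact hjk (inv_injective (by rw [hfc j, hfc k]))
  · -- B v ≠ v : spectral radius exceeds 1
    have hHerm : (Bᵀ * B).IsHermitian := by
      rw [← Matrix.conjTranspose_eq_transpose_of_trivial]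
      exact Matrix.isHermitian_conjTranspose_mul_self B
    obtain ⟨t, w, hwne, heigw, hineq⟩ := rayleigh_bound hn (Bᵀ * B) hHerm v
    have hquad : v ⬝ᵥ (Bᵀ * B).mulVec v = u ⬝ᵥ u := by
      rw [← Matrix.mulVec_mulVec, Matrix.dotProduct_mulVec, Matrix.vecMul_transpose, hu]
    have huu : u ⬝ᵥ u = v ⬝ᵥ v + (u - v) ⬝ᵥ (u - v) := by
      have h1 : u ⬝ᵥ v = v ⬝ᵥ v := by rw [dotProduct_comm]; exact huv
      have h2 : v ⬝ᵥ u = v ⬝ᵥ v := huv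
      simp only [sub_dotProduct, dotProduct_sub] at *
      linarith
    have hdiffpos : 0 < (u - v) ⬝ᵥ (u - v) := by
      obtain ⟨i0, hi0⟩ : ∃ i, u i ≠ v i := Function.ne_iff.mp hBv
      apply Finset.sum_pos' (fun i _ => mul_self_nonneg _)
      refine ⟨i0, Finset.mem_univ i0, ?_⟩
      have : (u - v) i0 ≠ 0 := sub_ne_zero.mpr hi0
      exact mul_self_pos.mpr this
    have ht1 : 1 < t := by
      have hlt : v ⬝ᵥ v < t * (v ⬝ᵥ v) := by
        rw [hquad, huu] at hineq
        linarith
      nlinarith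
    set w' : Fin n → ℝ := B *ᵥ w with hw'def
    have hw' : (B * Bᵀ) *ᵥ w' = t • w' := by
      rw [hw'def, Matrix.mulVec_mulVec, mul_assoc, ← Matrix.mulVec_mulVec, heigw,
        Matrix.mulVec_smul]
    have hw'ne : w' ≠ 0 := by
      intro h0
      have h1 : (Bᵀ * B) *ᵥ w = 0 := by
        rw [← Matrix.mulVec_mulVec, ← hw'def, h0, Matrix.mulVec_zero]
      rw [heigw] at h1
      rcases smul_eq_zero.mp h1 with h | h
      · exact (by linarith : (1:ℝ) < 0).not_gt (by linarith) |>.elim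
      · exact hwne h
    set z : Fin n → ℝ := fun i => (q i)⁻¹ * w' i with hz
    have hzne : z ≠ 0 := by
      obtain ⟨i0, hi0⟩ := Function.ne_iff.mp hw'ne
      intro h0
      have := congrFun h0 i0
      simp only [hz, Pi.zero_apply] at this
      exact hi0 (by
        have hqi := inv_ne_zero (hq i0)
        rcases mul_eq_zero.mp this with h | h
        · exact absurd h hqi
        · exact h)
    have hMz : M.mulVec z = t • z := by
      funext i
      apply mul_left_cancel₀ (hq i)
      have lhs : q i * (M *ᵥ z) i = ((B * Bᵀ) *ᵥ w') i := by
        simp only [Matrix.mulVec, dotProduct, Finset.mul_sum]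
        refine Finset.sum_congr rfl fun j _ => ?_
        rw [show q i * (M i j * z j) = (q i * M i j) * z j by ring, hsim i j, hz]
        rw [show (B * Bᵀ) i j * q j * ((q j)⁻¹ * w' j)
            = (B * Bᵀ) i j * (q j * (q j)⁻¹) * w' j by ring,
          mul_inv_cancel₀ (hq j), mul_one]
      rw [lhs, hw']
      simp only [Pi.smul_apply, smul_eq_mul, hz]
      rw [show q i * (t * ((q i)⁻¹ * w' i)) = t * ((q i * (q i)⁻¹) * w' i) by ring,
        mul_inv_cancel₀ (hq i), one_mul]
    have habs := abs_le_specRad M hzne hMz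
    have := le_abs_self t
    linarith

theorem nash_equilibrium_sinks {n m : ℕ} (hn : 2 ≤ n) (hm : 0 < m)
    (S : Matrix (Fin n) (Fin n) ℝ) (hS : ColStochastic S) (hirr : MatIrreducible S)
    (r : Fin n → ℝ) (hr : ∀ i, r i ≠ 0)
    (hsym : (Matrix.diagonal r * S * (Matrix.diagonal r)⁻¹).IsSymm)
    (f₁ f₂ : Fin n → ℝ) (hf₁ : ∀ j, 0 < f₁ j) (hf₂ : ∀ j, 0 < f₂ j)
    (htemp : f₂ ≠ f₁)
    (hspat : (∃ j k, f₁ j ≠ f₁ k) ∨ (∃ j k, f₂ j ≠ f₂ k))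
    (d : Fin m → ℝ) (hd : ∀ i, d i ∈ Set.Icc (0 : ℝ) 1)
    (hfix : ∀ i, ∃ x : Fin n → ℝ, (∀ j, 0 < x j) ∧
      (((1 - d i) • 1 + d i • S) * Matrix.diagonal f₂ *
        (((1 - d i) • 1 + d i • S) * Matrix.diagonal f₁)).mulVec x = x)
    (hnash : ∀ dt : ℝ, 0 ≤ dt → dt ≤ 1 →
      specRad (((1 - dt) • 1 + dt • S) * Matrix.diagonal f₂ *
        (((1 - dt) • 1 + dt • S) * Matrix.diagonal f₁)) ≤ 1) :
    (∃ i, 0 < d i) ∧ (∀ j, f₁ j * f₂ j ≤ 1) ∧ (∃ j, f₁ j * f₂ j < 1) := by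
  have hnpos : 0 < n := lt_of_lt_of_le (by norm_num) hn
  -- entrywise symmetrizability
  have hdinv : (Matrix.diagonal r)⁻¹ = Matrix.diagonal (fun i => (r i)⁻¹) :=
    Matrix.inv_eq_right_inv (by
      rw [Matrix.diagonal_mul_diagonal,
        show (fun i => r i * (r i)⁻¹) = fun _ => (1:ℝ) from
          funext fun i => mul_inv_cancel₀ (hr i), Matrix.diagonal_one])
  have hMent : ∀ a b, (Matrix.diagonal r * S * (Matrix.diagonal r)⁻¹) a b
      = r a * S a b * (r b)⁻¹ := by
    intro a b
    rw [hdinv, Matrix.mul_diagonal, Matrix.diagonal_mul]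
  have hsymS : ∀ j k, r j ^ 2 * S j k = r k ^ 2 * S k j := by
    intro j k
    have h2 := congrFun (congrFun hsym j) k
    rw [Matrix.transpose_apply, hMent, hMent] at h2
    have h3 : (r k * S k j * (r j)⁻¹) * (r j * r k) = (r j * S j k * (r k)⁻¹) * (r j * r k) :=
      by rw [h2]
    rw [show (r k * S k j * (r j)⁻¹) * (r j * r k)
        = (r k * S k j * r k) * ((r j)⁻¹ * r j) by ring, inv_mul_cancel₀ (hr j), mul_one] at h3
    rw [show (r j * S j k * (r k)⁻¹) * (r j * r k)
        = (r j * S j k * r j) * ((r k)⁻¹ * r k) by ring, inv_mul_cancel₀ (hr k), mul_one] at h3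
    linear_combination - h3
  -- the dt = 0 matrix is diagonal
  have hzero : ((1 - (0:ℝ)) • (1 : Matrix (Fin n) (Fin n) ℝ) + (0:ℝ) • S) = 1 := by
    simp
  have hMdiag : (1 : Matrix (Fin n) (Fin n) ℝ) * Matrix.diagonal f₂ *
      ((1 : Matrix (Fin n) (Fin n) ℝ) * Matrix.diagonal f₁)
      = Matrix.diagonal (fun j => f₂ j * f₁ j) := by
    rw [one_mul, one_mul, Matrix.diagonal_mul_diagonal]
  -- part 2: no sources
  have h0 := hnash 0 le_rfl zero_le_one
  rw [hzero, hMdiag] at h0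
  have h2 : ∀ j, f₁ j * f₂ j ≤ 1 := by
    intro j
    have hev : (Matrix.diagonal (fun j => f₂ j * f₁ j)).mulVec (Pi.single j 1)
        = (f₂ j * f₁ j) • (Pi.single j 1 : Fin n → ℝ) := by
      funext i
      rw [Matrix.mulVec_diagonal]
      by_cases h : i = j
      · subst h; simp
      · simp [Pi.single_apply, h]
    have hne : (Pi.single j 1 : Fin n → ℝ) ≠ 0 := by
      intro h
      have := congrFun h j
      simp at this
    have habs := abs_le_specRad _ hne hev
    calc f₁ j * f₂ j = |f₂ j * f₁ j| := by
          rw [abs_of_pos (mul_pos (hf₂ j) (hf₁ j))]; ring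
      _ ≤ specRad (Matrix.diagonal (fun j => f₂ j * f₁ j)) := habs
      _ ≤ 1 := h0
  -- reduction: not all patches balanced
  have hone : ((1 - (1:ℝ)) • (1 : Matrix (Fin n) (Fin n) ℝ) + (1:ℝ) • S) = S := by
    simp
  have h1nash := hnash 1 zero_le_one le_rfl
  rw [hone] at h1nash
  have hcore : ¬ (∀ j, f₁ j * f₂ j = 1) := by
    intro hbal
    have hbal' : ∀ j, f₂ j = (f₁ j)⁻¹ := fun j =>
      eq_inv_of_mul_eq_one_right (hbal j)
    have hspat' : ∃ j k, f₁ j ≠ f₁ k := by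
      rcases hspat with ⟨j, k, h⟩ | ⟨j, k, h⟩
      · exact ⟨j, k, h⟩
      · exact ⟨j, k, fun he => h (by rw [hbal' j, hbal' k, he])⟩
    exact core_balanced hnpos S hS hirr r hr hsymS f₁ f₂ hf₁ hbal' hspat' h1nash
  -- part 1
  have h1 : ∃ i, 0 < d i := by
    by_contra hcon
    push_neg at hcon
    apply hcore
    intro j
    obtain ⟨x, hxpos, hfx⟩ := hfix ⟨0, hm⟩
    have hd0 : d ⟨0, hm⟩ = 0 := le_antisymm (hcon _) ((hd _).1)
    rw [hd0, hzero, hMdiag] at hfx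
    have hj := congrFun hfx j
    rw [Matrix.mulVec_diagonal] at hj
    have hx := (hxpos j).ne'
    have : f₂ j * f₁ j * x j = 1 * x j := by rw [one_mul]; exact hj
    have := mul_right_cancel₀ hx this
    linarith [this, mul_comm (f₂ j) (f₁ j)]
  -- part 3
  have h3 : ∃ j, f₁ j * f₂ j < 1 := by
    by_contra hcon
    push_neg at hcon
    exact hcore fun j => le_antisymm (h2 j) (hcon j)
  exact ⟨h1, h2, h3⟩
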